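/- Let q be a prime power, h ≥ 1, K ≥ 1, and let C be a K-dimensional F_{q^h}-linear subspace of F_{q^h}^N that is nondegenerate (for every coordinate i ∈ {1,…,N} there is c ∈ C with c_i ≠ 0) and such that every nonzero codeword of C is q-outer minimal. Then the minimum distance of C satisfies d(C) ≥ ⌈((q−1)(Kh−1)+1) / ((q−1)(h−1)+1)⌉, i.e., every nonzero codeword c ∈ C has wt(c) ≥ ⌈((q−1)(Kh−1)+1) / ((q−1)(h−1)+1)⌉. -/

import Mathlib

open MvPolynomial Finset
set_option maxHeartbeats 1000000
set_option synthInstance.maxHeartbeats 200000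

lemma jamison {F : Type} [Field F] [Fintype F] {n : ℕ} {ι : Type} [Fintype ι]
    (ℓ : ι → ((Fin n → F) →ₗ[F] F)) (hcov : ∀ z : Fin n → F, z ≠ 0 → ∃ r, ℓ r z = 1) :
    n * (Fintype.card F - 1) ≤ Fintype.card ι := by
  classical
  set f : MvPolynomial (Fin n) F :=
    ∏ r : ι, (1 - ∑ k : Fin n, MvPolynomial.C (ℓ r (fun j => if k = j then 1 else 0)) * X k)
    with hf
  have heval : ∀ z : Fin n → F, eval z f = ∏ r : ι, (1 - ℓ r z) := by
    intro z
    rw [hf, map_prod]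
    refine Finset.prod_congr rfl fun r _ => ?_
    rw [map_sub, map_one, map_sum]
    congr 1
    rw [LinearMap.pi_apply_eq_sum_univ (ℓ r) z]
    refine Finset.sum_congr rfl fun k _ => ?_
    rw [eval_mul, eval_C, eval_X, smul_eq_mul, mul_comm]
  have h0 : eval 0 f = 1 := by
    rw [heval]
    refine Finset.prod_eq_one fun r _ => by simp
  have hz : ∀ z : Fin n → F, z ≠ 0 → eval z f = 0 := by
    intro z hz
    obtain ⟨r, hr⟩ := hcov z hz
    rw [heval]
    exact Finset.prod_eq_zero (Finset.mem_univ r) (by rw [hr]; ring)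
  have hdeg : f.totalDegree ≤ Fintype.card ι := by
    rw [hf]
    calc (∏ r : ι, (1 - ∑ k : Fin n, MvPolynomial.C (ℓ r (fun j => if k = j then 1 else 0)) * X k)).totalDegree
        ≤ ∑ r : ι, (1 - ∑ k : Fin n, MvPolynomial.C (ℓ r (fun j => if k = j then 1 else 0)) * X k).totalDegree :=
          totalDegree_finset_prod _ _
      _ ≤ ∑ _r : ι, 1 := by
          refine Finset.sum_le_sum fun r _ => ?_
          have h1 : (1 - ∑ k : Fin n, MvPolynomial.C (ℓ r (fun j => if k = j then 1 else 0)) * X k)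
              = 1 + (- ∑ k : Fin n, MvPolynomial.C (ℓ r (fun j => if k = j then 1 else 0)) * X k) := by ring
          rw [h1]
          refine (totalDegree_add _ _).trans ?_
          simp only [totalDegree_one, totalDegree_neg]
          refine max_le (by norm_num) ?_
          refine (totalDegree_finset_sum _ _).trans ?_
          refine Finset.sup_le fun k _ => ?_
          refine (totalDegree_mul _ _).trans ?_
          simp [totalDegree_C, totalDegree_X]
      _ = Fintype.card ι := by simp
  by_contra hlt
  push_neg at hlt
  have hs : f.totalDegree < (Fintype.card F - 1) * Fintype.card (Fin n) := by
    rw [Fintype.card_fin]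
    calc f.totalDegree ≤ Fintype.card ι := hdeg
      _ < n * (Fintype.card F - 1) := hlt
      _ = (Fintype.card F - 1) * n := Nat.mul_comm _ _
  have := MvPolynomial.sum_eval_eq_zero f hs
  have hsum : ∑ x : Fin n → F, eval x f = 1 := by
    rw [Finset.sum_eq_single (0 : Fin n → F)]
    · exact h0
    · exact fun b _ hb => hz b hb
    · exact fun h => absurd (Finset.mem_univ _) h
  rw [hsum] at this
  exact one_ne_zero this

theorem stmt_3 (q h K N : ℕ) (hq : IsPrimePow q) (hh : 1 ≤ h) (hK : 1 ≤ K)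
    (Fq FL : Type) [Field Fq] [Field FL] [Algebra Fq FL] [Fintype Fq] [Fintype FL]
    (hcard_q : Fintype.card Fq = q) (hcard_L : Fintype.card FL = q ^ h)
    (C : Submodule FL (Fin N → FL)) (hdim : Module.finrank FL C = K)
    (hnondeg : ∀ i : Fin N, ∃ c ∈ C, c i ≠ 0)
    (houter : ∀ c ∈ C, c ≠ 0 → ∀ c' ∈ C,
      (∀ i, c' i ≠ 0 → c i ≠ 0) →
      (∀ i, c i ≠ 0 → ∃ l : Fq, c' i = algebraMap Fq FL l * c i) →
      ∃ l : Fq, c' = algebraMap Fq FL l • c) :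
    ∀ c ∈ C, c ≠ 0 →
      ((q - 1) * (K * h - 1) + 1) ⌈/⌉ ((q - 1) * (h - 1) + 1) ≤ Nat.card {i | c i ≠ 0} := by
  classical
  intro c hcC hc0
  have hq2 : 2 ≤ q := hq.two_le
  -- finrank computations
  have hfinFL : Module.finrank Fq FL = h := by
    have := Module.card_eq_pow_finrank (K := Fq) (V := FL)
    rw [hcard_q, hcard_L] at this
    exact (Nat.pow_right_injective hq2 this.symm)
  have hm : Module.finrank Fq ↥C = K * h := by
    have := Module.finrank_mul_finrank Fq FL ↥C
    rw [hfinFL, hdim] at this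
    rw [← this]; ring
  -- basis of FL over Fq containing 1
  have hli : LinearIndepOn Fq id ({(1 : FL)} : Set FL) :=
    .singleton one_ne_zero
  set η := hli.extend (Set.subset_univ ({(1:FL)} : Set FL)) with hη
  let e : Module.Basis η Fq FL := Module.Basis.extend hli
  haveI : Fintype η := FiniteDimensional.fintypeBasisIndex e
  let j1 : η := ⟨(1 : FL), hli.subset_extend _ rfl⟩
  have hej1 : e j1 = 1 := Module.Basis.extend_apply_self hli j1
  have hcardη : Fintype.card η = h := by rw [← hfinFL, Module.finrank_eq_card_basis e]
  -- the functionals t i j on ↥C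
  let t : Fin N → η → (↥C →ₗ[Fq] Fq) := fun i j =>
    (e.coord j) ∘ₗ ((LinearMap.mulRight Fq ((c i)⁻¹)) ∘ₗ
      ((LinearMap.proj i) ∘ₗ (C.subtype.restrictScalars Fq)))
  have ht_apply : ∀ (i : Fin N) (j : η) (y : ↥C),
      t i j y = e.repr ((y : Fin N → FL) i * (c i)⁻¹) j := by
    intro i j y; rfl
  set cW : ↥C := ⟨c, hcC⟩ with hcWdef
  have htc : ∀ i : Fin N, c i ≠ 0 → ∀ j : η, t i j cW = if j1 = j then 1 else 0 := by
    intro i hci j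
    rw [ht_apply]
    show e.repr (c i * (c i)⁻¹) j = _
    rw [mul_inv_cancel₀ hci, ← hej1, e.repr_self, Finsupp.single_apply]
  -- reconstruction
  have hrec : ∀ (y : ↥C) (i : Fin N), c i ≠ 0 → (∀ j : η, j ≠ j1 → t i j y = 0) →
      (y : Fin N → FL) i = algebraMap Fq FL (t i j1 y) * c i := by
    intro y i hci hj
    have hv : ((y : Fin N → FL) i * (c i)⁻¹) = (t i j1 y) • (1 : FL) := by
      conv_lhs => rw [← e.sum_repr ((y : Fin N → FL) i * (c i)⁻¹)]
      rw [Finset.sum_eq_single j1]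
      · rw [← ht_apply, hej1]
      · intro b _ hb
        rw [← ht_apply, hj b hb, zero_smul]
      · intro hmem; exact absurd (Finset.mem_univ _) hmem
    have := congrArg (· * c i) hv
    rw [inv_mul_cancel_right₀ hci] at this
    rw [this, Algebra.algebraMap_eq_smul_one, smul_mul_assoc, one_mul]
  -- support finset
  set Sf : Finset (Fin N) := Finset.univ.filter (fun i => c i ≠ 0) with hSf
  have hwcard : Nat.card {i | c i ≠ 0} = Sf.card := by
    rw [Nat.card_eq_fintype_card, hSf, ← Fintype.card_subtype]
    exact Fintype.card_congr' rfl
  obtain ⟨i0, hi0⟩ : ∃ i, c i ≠ 0 := by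
    by_contra hno; push_neg at hno; exact hc0 (funext fun i => hno i)
  have hi0S : i0 ∈ Sf := by rw [hSf]; simp [hi0]
  -- the hyperplane slice
  set T : Submodule Fq ↥C := LinearMap.ker (t i0 j1) with hT
  set n : ℕ := Module.finrank Fq ↥T with hn
  have hone : t i0 j1 cW = 1 := by rw [htc i0 hi0 j1, if_pos rfl]
  have hnm : 1 + n = K * h := by
    have hsurj : LinearMap.range (t i0 j1) = ⊤ := by
      rw [LinearMap.range_eq_top]
      intro a
      exact ⟨a • cW, by rw [map_smul, hone, smul_eq_mul, mul_one]⟩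
    have := LinearMap.finrank_range_add_finrank_ker (t i0 j1)
    rw [hsurj, finrank_top, Module.finrank_self, hm] at this
    rw [← this, hn]
  -- index type
  let J' := ({j : η // j ≠ j1} × {μ : Fq // μ ≠ 0})
  let ι := (↥(Sf.erase i0) × Option J') ⊕ J'
  let res : (↥C →ₗ[Fq] Fq) → (↥T →ₗ[Fq] Fq) := fun g => g ∘ₗ T.subtype
  let ℓ : ι → (↥T →ₗ[Fq] Fq) := fun r =>
    match r with
    | Sum.inl (i, none) => -(res (t i.1 j1))
    | Sum.inl (i, some (j, μ)) => μ.1⁻¹ • res (t i.1 j.1)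
    | Sum.inr (j, μ) => μ.1⁻¹ • res (t i0 j.1)
  -- the covering property
  have hcov : ∀ z : ↥T, z ≠ 0 → ∃ r : ι, ℓ r z = 1 := by
    intro z hz
    by_contra hno
    push_neg at hno
    set yW : ↥C := cW + (T.subtype z) with hyWdef
    have hzt : ∀ (i : Fin N) (j : η), t i j yW = t i j cW + t i j (T.subtype z) :=
      fun i j => map_add _ _ _
    have hzker : t i0 j1 (T.subtype z) = 0 := LinearMap.mem_ker.mp z.2
    have hd : t i0 j1 yW = 1 := by rw [hzt, hone, hzker, add_zero]
    have hab : ∀ i ∈ Sf, ∀ j : η, j ≠ j1 → t i j yW = 0 := by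
      intro i hiS j hj
      by_contra hne
      have hci : c i ≠ 0 := (Finset.mem_filter.mp hiS).2
      have h0 : t i j cW = 0 := by
        rw [htc i hci j, if_neg (fun hh => hj hh.symm)]
      have hzv : t i j (T.subtype z) = t i j yW := by rw [hzt, h0, zero_add]
      rcases eq_or_ne i i0 with rfl | hii
      · apply hno (Sum.inr (⟨j, hj⟩, ⟨t i j yW, hne⟩))
        have hr : ℓ (Sum.inr (⟨j, hj⟩, ⟨t i j yW, hne⟩)) z
            = (t i j yW)⁻¹ * (t i j (T.subtype z)) := rfl
        rw [hr, hzv, inv_mul_cancel₀ hne]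
      · apply hno (Sum.inl (⟨i, Finset.mem_erase.mpr ⟨hii, hiS⟩⟩,
          some (⟨j, hj⟩, ⟨t i j yW, hne⟩)))
        have hr : ℓ (Sum.inl (⟨i, Finset.mem_erase.mpr ⟨hii, hiS⟩⟩,
            some (⟨j, hj⟩, ⟨t i j yW, hne⟩))) z
            = (t i j yW)⁻¹ * (t i j (T.subtype z)) := rfl
        rw [hr, hzv, inv_mul_cancel₀ hne]
    have hc1 : ∀ i ∈ Sf, t i j1 yW ≠ 0 := by
      intro i hiS h0
      have hci : c i ≠ 0 := (Finset.mem_filter.mp hiS).2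
      rcases eq_or_ne i i0 with rfl | hii
      · rw [hd] at h0; exact one_ne_zero h0
      · have h1 := hzt i j1
        rw [h0, htc i hci j1, if_pos rfl] at h1
        have hneg : t i j1 (T.subtype z) = -1 := eq_neg_of_add_eq_zero_right h1.symm
        apply hno (Sum.inl (⟨i, Finset.mem_erase.mpr ⟨hii, hiS⟩⟩, none))
        have hr : ℓ (Sum.inl (⟨i, Finset.mem_erase.mpr ⟨hii, hiS⟩⟩, none)) z
            = -(t i j1 (T.subtype z)) := rfl
        rw [hr, hneg, neg_neg]
    have hy : ∀ i ∈ Sf, (yW : Fin N → FL) i = algebraMap Fq FL (t i j1 yW) * c i :=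
      fun i hiS => hrec yW i (Finset.mem_filter.mp hiS).2 (hab i hiS)
    have hyi0 : (yW : Fin N → FL) i0 ≠ 0 := by
      rw [hy i0 hi0S, hd, map_one, one_mul]; exact hi0
    have hy0 : (yW : Fin N → FL) ≠ 0 := fun hyz => hyi0 (by rw [hyz]; rfl)
    have h1 : ∀ i, c i ≠ 0 → (yW : Fin N → FL) i ≠ 0 := by
      intro i hci
      have hiS : i ∈ Sf := Finset.mem_filter.mpr ⟨Finset.mem_univ _, hci⟩
      rw [hy i hiS]
      exact mul_ne_zero (fun hmz => hc1 i hiS ((map_eq_zero_iff _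
        (algebraMap Fq FL).injective).mp hmz)) hci
    have h2 : ∀ i, (yW : Fin N → FL) i ≠ 0 → ∃ l : Fq, c i = algebraMap Fq FL l * (yW : Fin N → FL) i := by
      intro i hyi
      by_cases hci : c i = 0
      · exact ⟨0, by rw [map_zero, zero_mul, hci]⟩
      · have hiS : i ∈ Sf := Finset.mem_filter.mpr ⟨Finset.mem_univ _, hci⟩
        refine ⟨(t i j1 yW)⁻¹, ?_⟩
        rw [hy i hiS, ← mul_assoc, ← map_mul, inv_mul_cancel₀ (hc1 i hiS), map_one, one_mul]
    obtain ⟨l, hl⟩ := houter (yW : Fin N → FL) yW.2 hy0 c hcC h1 h2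
    have hcWy : cW = algebraMap Fq FL l • yW := Subtype.ext hl
    have hl1 : l = 1 := by
      have hca := congrArg (t i0 j1) hcWy
      rw [hone, algebraMap_smul, map_smul, smul_eq_mul, hd, mul_one] at hca
      exact hca.symm
    rw [hl1, map_one, one_smul] at hcWy
    have hsz : T.subtype z = 0 := by
      have := hcWy.trans hyWdef
      exact (left_eq_add.mp this)
    exact hz (Submodule.injective_subtype T (by rw [hsz]; rfl))
  -- apply jamison
  haveI : Module.Free Fq ↥T := Module.Free.of_divisionRing Fq ↥T
  let b := Module.finBasis Fq ↥T
  let φ : (Fin n → Fq) ≃ₗ[Fq] ↥T := b.equivFun.symm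
  have hJ : n * (q - 1) ≤ Fintype.card ι := by
    rw [← hcard_q]
    refine jamison (fun r => (ℓ r) ∘ₗ (φ : (Fin n → Fq) →ₗ[Fq] ↥T)) (fun z hz => ?_)
    obtain ⟨r, hr⟩ := hcov (φ z) (by
      intro hzero
      exact hz (φ.map_eq_zero_iff.mp hzero))
    exact ⟨r, hr⟩
  -- cardinality computation
  have hcardJ' : Fintype.card J' = (h - 1) * (q - 1) := by
    rw [Fintype.card_prod]
    congr 1
    · rw [Fintype.card_subtype_compl, hcardη, Fintype.card_subtype_eq]
    · rw [Fintype.card_subtype_compl, hcard_q, Fintype.card_subtype_eq]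
  have hcardι : Fintype.card ι = (Sf.card - 1) * ((h - 1) * (q - 1) + 1) + (h - 1) * (q - 1) := by
    show Fintype.card ((↥(Sf.erase i0) × Option J') ⊕ J') = _
    rw [Fintype.card_sum, Fintype.card_prod, Fintype.card_option, Fintype.card_coe,
      Finset.card_erase_of_mem hi0S, hcardJ']
  -- arithmetic endgame
  rw [hwcard]
  have hw1 : 1 ≤ Sf.card := Finset.card_pos.mpr ⟨i0, hi0S⟩
  obtain ⟨wm, hwm⟩ : ∃ wm, Sf.card = wm + 1 := ⟨Sf.card - 1, by omega⟩
  have hD : 0 < (q - 1) * (h - 1) + 1 := by omega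
  rw [ceilDiv_le_iff_le_mul hD]
  have hkey : n * (q - 1) ≤ wm * ((h - 1) * (q - 1) + 1) + (h - 1) * (q - 1) := by
    rw [hcardι, hwm] at hJ; simpa using hJ
  have hneq : K * h - 1 = n := by omega
  rw [hneq]
  have hexp : ((q - 1) * (h - 1) + 1) * (wm + 1)
      = wm * ((h - 1) * (q - 1) + 1) + ((h - 1) * (q - 1) + 1) := by ring
  rw [hwm, hexp, mul_comm (q-1) n]
  omega
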